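/- Let Z be a finite set, N ≤ B = Perm(Z) a regular subgroup, z₀ ∈ Z, and suppose K is a subgroup of N of index 2 with X = K·z₀ (the K-orbit of z₀) and Y = Z \ X, so that N ≤ W(X,Y). Then Norm_B(N) ≤ W(X,Y) if and only if K is a characteristic subgroup of N (i.e., K is mapped to itself by every automorphism of N). -/

import Mathlib

/-- A subgroup of `Equiv.Perm Z` is regular if it acts transitively and
no non-identity element has a fixed point. -/
def IsRegularSubgroup {Z : Type*} (N : Subgroup (Equiv.Perm Z)) : Prop :=
  (∀ z w : Z, ∃ σ ∈ N, σ z = w) ∧ ∀ σ ∈ N, σ ≠ 1 → ∀ z : Z, σ z ≠ z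

/-- The wreath-product subgroup `W(X, Y)` (with `Y = Xᶜ`): all permutations that
either fix both `X` and `Y` setwise, or interchange them. -/
def wprod {Z : Type*} (X : Set Z) : Subgroup (Equiv.Perm Z) where
  carrier := {w | (w '' X = X ∧ w '' Xᶜ = Xᶜ) ∨ (w '' X = Xᶜ ∧ w '' Xᶜ = X)}
  one_mem' := by simp
  mul_mem' := by
    rintro a b (⟨ha1, ha2⟩ | ⟨ha1, ha2⟩) (⟨hb1, hb2⟩ | ⟨hb1, hb2⟩) <;>
      simp only [Set.mem_setOf_eq, Equiv.Perm.coe_mul, Set.image_comp, hb1, hb2, ha1, ha2] <;>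
      tauto
  inv_mem' := by
    intro a h
    have key : ∀ S T : Set Z, a '' S = T → (a⁻¹ : Equiv.Perm Z) '' T = S := by
      intro S T hST
      rw [← hST, Set.image_image]
      simp
    rcases h with ⟨h1, h2⟩ | ⟨h1, h2⟩
    · exact Or.inl ⟨key _ _ h1, key _ _ h2⟩
    · exact Or.inr ⟨key _ _ h2, key _ _ h1⟩

/-- The image of the left regular representation `λ : G → Perm G`. -/
def leftRegRange (G : Type*) [Group G] : Subgroup (Equiv.Perm G) :=
  (MulAction.toPermHom G G).range

/-- `|Υ_n|`: number of units of exponent 2 mod `n`. -/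
noncomputable def upsilonCard (n : ℕ) : ℕ :=
  Nat.card {u : (ZMod n)ˣ // u ^ 2 = 1}


lemma mem_wprod_iff {Z : Type*} (X : Set Z) (w : Equiv.Perm Z) :
    w ∈ wprod X ↔ (w '' X = X ∧ w '' Xᶜ = Xᶜ) ∨ (w '' X = Xᶜ ∧ w '' Xᶜ = X) :=
  Iff.rfl

/-- For a regular `N ≤ W(X,Y)` with `K ≤ N` of index 2 and `X = K · z₀`, the normalizer
of `N` lies in `W(X,Y)` iff `K` is characteristic in `N`. -/
theorem normalizer_le_wprod_iff_characteristic {Z : Type*} [Fintype Z]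
    (N K : Subgroup (Equiv.Perm Z)) (hN : IsRegularSubgroup N) (z₀ : Z)
    (hKN : K ≤ N) (hKidx : K.relIndex N = 2) (X : Set Z)
    (hX : X = (fun σ : Equiv.Perm Z => σ z₀) '' (K : Set (Equiv.Perm Z))) :
    Subgroup.normalizer (N : Set (Equiv.Perm Z)) ≤ wprod X ↔ (K.subgroupOf N).Characteristic := by

  classical
  obtain ⟨htrans, hfree⟩ := hN
  -- injectivity of the evaluation map on N
  have hinj : ∀ σ ∈ N, ∀ τ ∈ N, σ z₀ = τ z₀ → σ = τ := by
    intro σ hσ τ hτ h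
    by_contra hne
    exact hfree (τ⁻¹ * σ) (mul_mem (inv_mem hτ) hσ)
      (fun h1 => hne (inv_mul_eq_one.mp h1).symm) z₀
      (by simp [Equiv.Perm.mul_apply, h])
  have hz₀X : z₀ ∈ X := by
    rw [hX]; exact ⟨1, K.one_mem, rfl⟩
  have hXc : Xᶜ = (fun σ : Equiv.Perm Z => σ z₀) '' ((N : Set (Equiv.Perm Z)) \ (K : Set (Equiv.Perm Z))) := by
    ext z
    simp only [Set.mem_compl_iff, hX, Set.mem_image, Set.mem_diff, SetLike.mem_coe]
    constructor
    · intro hz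
      obtain ⟨σ, hσ, rfl⟩ := htrans z₀ z
      exact ⟨σ, ⟨hσ, fun hσK => hz ⟨σ, hσK, rfl⟩⟩, rfl⟩
    · rintro ⟨σ, ⟨hσN, hσK⟩, rfl⟩ ⟨κ, hκ, hκz⟩
      have hks := hinj κ (hKN hκ) σ hσN hκz
      exact hσK (hks ▸ hκ)
  constructor
  · -- normalizer ≤ wprod → characteristic
    intro hnorm
    rw [Subgroup.characteristic_iff_map_le]
    intro φ
    intro y hy
    rw [Subgroup.mem_map] at hy
    obtain ⟨x, hx, rfl⟩ := hy
    -- the evaluation equivalence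
    have einj : Function.Injective (fun σ : ↥N => (σ : Equiv.Perm Z) z₀) := by
      intro a c h
      exact Subtype.ext (hinj _ a.2 _ c.2 h)
    have esurj : Function.Surjective (fun σ : ↥N => (σ : Equiv.Perm Z) z₀) := by
      intro z
      obtain ⟨σ, hσ, hz⟩ := htrans z₀ z
      exact ⟨⟨σ, hσ⟩, hz⟩
    set e : ↥N ≃ Z := Equiv.ofBijective _ ⟨einj, esurj⟩ with hedef
    have he : ∀ x : ↥N, e x = (x : Equiv.Perm Z) z₀ := fun _ => rfl
    have hmul : ∀ g x : ↥N, (g : Equiv.Perm Z) (e x) = e (g * x) := by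
      intro g x
      simp [he, Equiv.Perm.mul_apply]
    set b : Equiv.Perm Z := (e.symm.trans φ.toEquiv).trans e with hbdef
    have hbfwd : ∀ x : ↥N, b (e x) = e (φ x) := by
      intro x
      simp [hbdef]
    have hbsymm : ∀ x : ↥N, b⁻¹ (e x) = e (φ.symm x) := by
      intro x
      have h1 : b (e (φ.symm x)) = e x := by
        rw [hbfwd, MulEquiv.apply_symm_apply]
      rw [← h1, Equiv.Perm.inv_def, Equiv.symm_apply_apply]
    have hbg : ∀ g : ↥N, b * (g : Equiv.Perm Z) * b⁻¹ = ((φ g : ↥N) : Equiv.Perm Z) := by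
      intro g
      ext z
      obtain ⟨x, rfl⟩ := e.surjective z
      simp only [Equiv.Perm.mul_apply]
      rw [hbsymm, hmul, hbfwd, map_mul, MulEquiv.apply_symm_apply, ← hmul]
    have h0 : e (1 : ↥N) = z₀ := by simp [he]
    have hb1 : b z₀ = z₀ := by
      rw [← h0, hbfwd, map_one, h0]
    have hbmem : b ∈ Subgroup.normalizer (N : Set (Equiv.Perm Z)) := by
      rw [Subgroup.mem_normalizer_iff]
      intro g
      constructor
      · intro hg
        rw [hbg ⟨g, hg⟩]
        exact (φ ⟨g, hg⟩).2
      · intro hg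
        have h3 : b * ((φ.symm ⟨b * g * b⁻¹, hg⟩ : ↥N) : Equiv.Perm Z) * b⁻¹ = b * g * b⁻¹ := by
          rw [hbg (φ.symm ⟨b * g * b⁻¹, hg⟩), MulEquiv.apply_symm_apply]
        have h4 : ((φ.symm ⟨b * g * b⁻¹, hg⟩ : ↥N) : Equiv.Perm Z) = g :=
          mul_left_cancel (mul_right_cancel h3)
        rw [← h4]
        exact (φ.symm ⟨b * g * b⁻¹, hg⟩).2
    have hbX : b '' X = X := by
      rcases (mem_wprod_iff X b).mp (hnorm hbmem) with ⟨h1, _⟩ | ⟨h1, _⟩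
      · exact h1
      · exfalso
        have hz : z₀ ∈ Xᶜ := h1 ▸ ⟨z₀, hz₀X, hb1⟩
        exact hz hz₀X
    -- conclude
    have hxK : (x : Equiv.Perm Z) ∈ K := hx
    have hmem : b (e x) ∈ b '' X := ⟨e x, hX ▸ ⟨(x : Equiv.Perm Z), hxK, rfl⟩, rfl⟩
    rw [hbX, hbfwd, hX] at hmem
    obtain ⟨κ, hκ, hκz⟩ := hmem
    have hid := hinj κ (hKN hκ) _ (φ x).2 (by exact hκz.trans (he _))
    show ((φ x : ↥N) : Equiv.Perm Z) ∈ K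
    rw [← hid]
    exact hκ
  · -- characteristic → normalizer ≤ wprod
    intro hchar b hb
    have hbN : ∀ g : Equiv.Perm Z, g ∈ N ↔ b * g * b⁻¹ ∈ N := Subgroup.mem_normalizer_iff.mp hb
    have hbN' : ∀ g : Equiv.Perm Z, g ∈ N → b⁻¹ * g * b ∈ N := by
      intro g hg
      apply (hbN _).mpr
      have h1 : b * (b⁻¹ * g * b) * b⁻¹ = g := by group
      rwa [h1]
    let ψ : ↥N ≃* ↥N :=
      { toFun := fun x => ⟨b * ↑x * b⁻¹, (hbN ↑x).mp x.2⟩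
        invFun := fun x => ⟨b⁻¹ * ↑x * b, hbN' ↑x x.2⟩
        left_inv := fun x => Subtype.ext (by show b⁻¹ * (b * ↑x * b⁻¹) * b = ↑x; group)
        right_inv := fun x => Subtype.ext (by show b * (b⁻¹ * ↑x * b) * b⁻¹ = ↑x; group)
        map_mul' := fun x y => Subtype.ext
          (by show b * ↑(x * y) * b⁻¹ = (b * ↑x * b⁻¹) * (b * ↑y * b⁻¹)
              rw [Subgroup.coe_mul]; group) }
    have hfix := hchar.fixed ψ
    have hbK : ∀ σ : Equiv.Perm Z, σ ∈ N → (b * σ * b⁻¹ ∈ K ↔ σ ∈ K) := by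
      intro σ hσ
      have h1 : (⟨σ, hσ⟩ : ↥N) ∈ (K.subgroupOf N).comap ψ.toMonoidHom ↔
          (⟨σ, hσ⟩ : ↥N) ∈ K.subgroupOf N := by rw [hfix]
      have h2 : ((⟨σ, hσ⟩ : ↥N) ∈ (K.subgroupOf N).comap ψ.toMonoidHom) ↔ b * σ * b⁻¹ ∈ K :=
        Iff.rfl
      exact (h2.symm.trans h1).trans Subgroup.mem_subgroupOf
    have hidx : (K.subgroupOf N).index = 2 := hKidx
    have hmul2 : ∀ σ τ' : Equiv.Perm Z, σ ∈ N → τ' ∈ N → (σ * τ' ∈ K ↔ (σ ∈ K ↔ τ' ∈ K)) := by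
      intro σ τ' hσ hτ'
      have h1 := Subgroup.mul_mem_iff_of_index_two hidx (a := (⟨σ, hσ⟩ : ↥N)) (b := ⟨τ', hτ'⟩)
      simpa [Subgroup.mem_subgroupOf] using h1
    obtain ⟨τ, hτN, hτz⟩ := htrans z₀ (b z₀)
    have himg : ∀ S : Set (Equiv.Perm Z),
        b '' ((fun σ : Equiv.Perm Z => σ z₀) '' S) =
          (fun σ : Equiv.Perm Z => σ z₀) '' ((fun σ : Equiv.Perm Z => b * σ * b⁻¹ * τ) '' S) := by
      intro S
      rw [← Set.image_comp, ← Set.image_comp]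
      apply Set.image_congr
      intro σ _
      show b (σ z₀) = (b * σ * b⁻¹ * τ) z₀
      simp only [Equiv.Perm.mul_apply]
      rw [hτz, Equiv.Perm.inv_def, Equiv.symm_apply_apply]
    have hsets : ∀ p : Prop,
        (fun σ : Equiv.Perm Z => b * σ * b⁻¹ * τ) '' {σ : Equiv.Perm Z | σ ∈ N ∧ (σ ∈ K ↔ p)} =
          {σ : Equiv.Perm Z | σ ∈ N ∧ (σ ∈ K ↔ (p ↔ τ ∈ K))} := by
      intro p
      ext ρ
      constructor
      · rintro ⟨σ, ⟨hσN, hσK⟩, rfl⟩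
        have hcN : b * σ * b⁻¹ ∈ N := (hbN σ).mp hσN
        refine ⟨mul_mem hcN hτN, ?_⟩
        rw [hmul2 _ _ hcN hτN, hbK σ hσN]
        tauto
      · rintro ⟨hρN, hρK⟩
        have hmemN : b⁻¹ * (ρ * τ⁻¹) * b ∈ N := hbN' _ (mul_mem hρN (inv_mem hτN))
        refine ⟨b⁻¹ * (ρ * τ⁻¹) * b, ⟨hmemN, ?_⟩, by group⟩
        have h5 : b * (b⁻¹ * (ρ * τ⁻¹) * b) * b⁻¹ = ρ * τ⁻¹ := by group
        have h6 := hbK _ hmemN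
        rw [h5] at h6
        have h7 := hmul2 ρ τ⁻¹ hρN (inv_mem hτN)
        have h8 : τ⁻¹ ∈ K ↔ τ ∈ K := ⟨fun h => by simpa using inv_mem h, inv_mem⟩
        rw [← h6, h7, h8]
        tauto
    have hset1 : (K : Set (Equiv.Perm Z)) = {σ : Equiv.Perm Z | σ ∈ N ∧ (σ ∈ K ↔ True)} := by
      ext σ
      simp only [SetLike.mem_coe, Set.mem_setOf_eq, iff_true]
      exact ⟨fun h => ⟨hKN h, h⟩, fun h => h.2⟩
    have hset2 : ((N : Set (Equiv.Perm Z)) \ (K : Set (Equiv.Perm Z))) =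
        {σ : Equiv.Perm Z | σ ∈ N ∧ (σ ∈ K ↔ False)} := by
      ext σ
      simp [Set.mem_diff]
    have hXeq : X = (fun σ : Equiv.Perm Z => σ z₀) '' {σ : Equiv.Perm Z | σ ∈ N ∧ (σ ∈ K ↔ True)} := by
      rw [hX, hset1]
    have hXceq : Xᶜ = (fun σ : Equiv.Perm Z => σ z₀) '' {σ : Equiv.Perm Z | σ ∈ N ∧ (σ ∈ K ↔ False)} := by
      rw [hXc, hset2]
    by_cases hτK : τ ∈ K
    · have hTT : {σ : Equiv.Perm Z | σ ∈ N ∧ (σ ∈ K ↔ (True ↔ τ ∈ K))} =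
          {σ : Equiv.Perm Z | σ ∈ N ∧ (σ ∈ K ↔ True)} := by
        ext σ; simp [hτK]
      have hFF : {σ : Equiv.Perm Z | σ ∈ N ∧ (σ ∈ K ↔ (False ↔ τ ∈ K))} =
          {σ : Equiv.Perm Z | σ ∈ N ∧ (σ ∈ K ↔ False)} := by
        ext σ; simp [hτK]
      refine (mem_wprod_iff X b).mpr (Or.inl ⟨?_, ?_⟩)
      · rw [hXeq, himg, hsets, hTT]
      · rw [hXceq, himg, hsets, hFF]
    · have hTF : {σ : Equiv.Perm Z | σ ∈ N ∧ (σ ∈ K ↔ (True ↔ τ ∈ K))} =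
          {σ : Equiv.Perm Z | σ ∈ N ∧ (σ ∈ K ↔ False)} := by
        ext σ; simp [hτK]
      have hFT : {σ : Equiv.Perm Z | σ ∈ N ∧ (σ ∈ K ↔ (False ↔ τ ∈ K))} =
          {σ : Equiv.Perm Z | σ ∈ N ∧ (σ ∈ K ↔ True)} := by
        ext σ; simp [hτK]
      refine (mem_wprod_iff X b).mpr (Or.inr ⟨?_, ?_⟩)
      · rw [hXceq, hXeq, himg, hsets, hTF]
      · rw [hXceq, hXeq, himg, hsets, hFT]
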